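/- Let {x_k} be a complete minimal system in H with biorthogonal {x_k*}, σ ⊆ ℕ, and for each m let σ_m = σ ∪ [m+1, ∞). Then the mixed system {x_k}_{k∈σ} ∪ {x_k*}_{k∈σ^c} is complete in H if and only if the intersection over all m of the closed linear spans H_{σ_m} = cl span{x_k : k ∈ σ_m} equals H_σ = cl span{x_k : k ∈ σ}. -/

import Mathlib

open Filter Topology

noncomputable section

variable {H : Type*} [NormedAddCommGroup H] [InnerProductSpace ℂ H] [CompleteSpace H]

/-- Closed linear span of a set of vectors. -/
def clSpan (s : Set H) : Submodule ℂ H := (Submodule.span ℂ s).topologicalClosure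

instance (s : Set H) : CompleteSpace (clSpan s) :=
  (Submodule.isClosed_topologicalClosure _).completeSpace_coe

/-- Orthogonal projection onto the closed linear span of `s`, as a map `H → H`. -/
def projS (s : Set H) : H →L[ℂ] H :=
  (clSpan s).subtypeL ∘L (clSpan s).orthogonalProjection

/-- The system `x` is complete: its closed linear span is all of `H`. -/
def IsCompleteSystem (x : ℕ → H) : Prop := clSpan (Set.range x) = ⊤

/-- The system `x` is minimal: no vector lies in the closed span of the others. -/
def IsMinimalSystem (x : ℕ → H) : Prop :=
  ∀ k, x k ∉ clSpan (x '' {j | j ≠ k})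

/-- `y` is biorthogonal to `x`. -/
def IsBiorthogonal (x y : ℕ → H) : Prop :=
  ∀ k j, (inner ℂ (x k) (y j) : ℂ) = if k = j then 1 else 0

lemma mem_span_orthogonal (s : Set H) (v : H) :
    v ∈ (Submodule.span ℂ s)ᗮ ↔ ∀ u ∈ s, (inner ℂ u v : ℂ) = 0 := by
  rw [Submodule.mem_orthogonal]
  constructor
  · exact fun h u hu => h u (Submodule.subset_span hu)
  · intro h u hu
    induction hu using Submodule.span_induction with
    | mem u hu => exact h u hu
    | zero => simp
    | add u w _ _ hu hw => rw [inner_add_left, hu, hw, add_zero]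
    | smul c u _ hu => rw [inner_smul_left, hu, mul_zero]

lemma clSpan_orthogonal (s : Set H) : (clSpan s)ᗮ = (Submodule.span ℂ s)ᗮ := by
  rw [clSpan, ← Submodule.orthogonal_orthogonal_eq_closure,
    Submodule.triorthogonal_eq_orthogonal]

lemma clSpan_orthogonal_orthogonal (s : Set H) : (clSpan s)ᗮᗮ = clSpan s := by
  rw [Submodule.orthogonal_orthogonal_eq_closure]
  exact (Submodule.isClosed_topologicalClosure _).submodule_topologicalClosure_eq

lemma mem_clSpan_of_mem (s : Set H) {v : H} (hv : v ∈ s) : v ∈ clSpan s :=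
  Submodule.le_topologicalClosure _ (Submodule.subset_span hv)

lemma clSpan_x_le_N (x y : ℕ → H) (hbi : IsBiorthogonal x y) (τ : Set ℕ) :
    clSpan (x '' τ) ≤ (Submodule.span ℂ (y '' τᶜ))ᗮ := by
  refine Submodule.topologicalClosure_minimal _ ?_ (Submodule.isClosed_orthogonal _)
  rw [Submodule.span_le]
  rintro _ ⟨k, hk, rfl⟩
  rw [SetLike.mem_coe, mem_span_orthogonal]
  rintro _ ⟨j, hj, rfl⟩
  have hkj : j ≠ k := fun h => hj (h ▸ hk)
  rw [← inner_conj_symm, hbi k j, if_neg (fun h => hkj h.symm), map_zero]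

lemma N_le_clSpan_x (x y : ℕ → H) (hc : IsCompleteSystem x) (hbi : IsBiorthogonal x y)
    (τ : Set ℕ) (hfin : τᶜ.Finite) :
    (Submodule.span ℂ (y '' τᶜ))ᗮ ≤ clSpan (x '' τ) := by
  have key : (clSpan (x '' τ))ᗮ ≤ clSpan (y '' τᶜ) := by
    intro h hh
    set g : H := ∑ j ∈ hfin.toFinset, (inner ℂ (x j) h : ℂ) • y j with hg
    have hg_mem : g ∈ clSpan (y '' τᶜ) := by
      apply Submodule.sum_mem
      intro j hj
      exact Submodule.smul_mem _ _
        (mem_clSpan_of_mem _ ⟨j, hfin.mem_toFinset.mp hj, rfl⟩)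
    have hxh : ∀ k ∈ τ, (inner ℂ (x k) h : ℂ) = 0 := by
      intro k hk
      exact (Submodule.mem_orthogonal _ _).mp hh _ (mem_clSpan_of_mem _ ⟨k, hk, rfl⟩)
    have hdiff : h - g ∈ (Submodule.span ℂ (Set.range x))ᗮ := by
      rw [mem_span_orthogonal]
      rintro _ ⟨k, rfl⟩
      rw [inner_sub_right, hg, inner_sum]
      have : ∀ j ∈ hfin.toFinset,
          (inner ℂ (x k) ((inner ℂ (x j) h : ℂ) • y j) : ℂ)
            = if k = j then (inner ℂ (x j) h : ℂ) else 0 := by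
        intro j _
        rw [inner_smul_right, hbi k j]
        simp only [mul_ite, mul_one, mul_zero]
      rw [Finset.sum_congr rfl this, Finset.sum_ite_eq]
      by_cases hk : k ∈ τᶜ
      · rw [if_pos (hfin.mem_toFinset.mpr hk), sub_self]
      · rw [if_neg (fun hmem => hk (hfin.mem_toFinset.mp hmem)),
          hxh k (Set.notMem_compl_iff.mp hk), sub_zero]
    have hbot : (Submodule.span ℂ (Set.range x))ᗮ = ⊥ := by
      rw [← clSpan_orthogonal, hc, Submodule.top_orthogonal_eq_bot]
    have : h - g = 0 := by rwa [hbot, Submodule.mem_bot] at hdiff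
    have : h = g := by rwa [sub_eq_zero] at this
    rw [this]; exact hg_mem
  calc (Submodule.span ℂ (y '' τᶜ))ᗮ = (clSpan (y '' τᶜ))ᗮ := (clSpan_orthogonal _).symm
    _ ≤ (clSpan (x '' τ))ᗮᗮ := Submodule.orthogonal_le key
    _ = clSpan (x '' τ) := clSpan_orthogonal_orthogonal _

lemma iInf_eq_N (x y : ℕ → H) (hc : IsCompleteSystem x) (hbi : IsBiorthogonal x y)
    (σ : Set ℕ) :
    (⨅ m : ℕ, clSpan (x '' (σ ∪ {k | m ≤ k}))) = (Submodule.span ℂ (y '' σᶜ))ᗮ := by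
  apply le_antisymm
  · intro h hh
    rw [mem_span_orthogonal]
    rintro _ ⟨j, hj, rfl⟩
    have h1 : h ∈ clSpan (x '' (σ ∪ {k | j + 1 ≤ k})) :=
      (Submodule.mem_iInf _).mp hh (j + 1)
    have h2 := clSpan_x_le_N x y hbi _ h1
    rw [mem_span_orthogonal] at h2
    refine h2 _ ⟨j, ?_, rfl⟩
    rintro (hmem | hmem)
    · exact hj hmem
    · exact Nat.not_succ_le_self j hmem
  · rw [le_iInf_iff]
    intro m
    refine le_trans ?_ (N_le_clSpan_x x y hc hbi _ ?_)
    · exact Submodule.orthogonal_le (Submodule.span_mono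
        (Set.image_mono (Set.compl_subset_compl.mpr Set.subset_union_left)))
    · refine (Set.finite_Iio m).subset fun k hk => ?_
      simp only [Set.mem_compl_iff, Set.mem_union, Set.mem_setOf_eq, not_or, not_le] at hk
      exact hk.2

/-- For a complete minimal system `x` with biorthogonal `y` and `σ ⊆ ℕ`, the mixed system
`{x_k}_{k∈σ} ∪ {x_k^*}_{k∈σᶜ}` is complete iff `⋂ₘ H_{σₘ} = H_σ`, where
`σₘ = σ ∪ [m, ∞)`. -/
theorem mixed_complete_iff_iInf_spans [TopologicalSpace.SeparableSpace H]
    (x y : ℕ → H) (hc : IsCompleteSystem x) (hmin : IsMinimalSystem x)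
    (hbi : IsBiorthogonal x y) (σ : Set ℕ) :
    clSpan (x '' σ ∪ y '' σᶜ) = ⊤ ↔
      (⨅ m : ℕ, clSpan (x '' (σ ∪ {k | m ≤ k}))) = clSpan (x '' σ) := by
  rw [iInf_eq_N x y hc hbi σ]
  set N : Submodule ℂ H := (Submodule.span ℂ (y '' σᶜ))ᗮ with hN
  set K : Submodule ℂ H := clSpan (x '' σ) with hK
  have hKN : K ≤ N := clSpan_x_le_N x y hbi σ
  rw [clSpan, Submodule.topologicalClosure_eq_top_iff, Submodule.span_union,
    ← Submodule.inf_orthogonal, ← clSpan_orthogonal, ← hN, ← hK]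
  constructor
  · intro hbot
    apply le_antisymm _ hKN
    intro h hh
    obtain ⟨a, ha, b, hb, rfl⟩ := Submodule.exists_add_mem_mem_orthogonal (K := K) h
    have hbN : b ∈ N := by
      have := Submodule.sub_mem _ hh (hKN ha)
      simpa using this
    have : b ∈ Kᗮ ⊓ N := ⟨hb, hbN⟩
    rw [hbot, Submodule.mem_bot] at this
    rw [this, add_zero]
    exact ha
  · intro hNK
    rw [hNK, inf_comm]
    exact K.inf_orthogonal_eq_bot
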